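/- Compatibility of the Kronecker coproduct with the canonical embeddings: let a, b : ℕ → ℕ and for n ∈ ℕ write A_n(a) := Matrix (Π i : Fin n, Fin (a i)) ℂ. Let ψ_a^{(n)} : A_n(a) → A_{n+1}(a) be the unital *-embedding X ↦ X ⊗ I, i.e. (ψ_a^{(n)} X)_{J,K} = X_{J∘castSucc, K∘castSucc} if J(n) = K(n) and 0 otherwise, and define ψ_b^{(n)} and ψ_{a·b}^{(n)} (on Matrix (Π i : Fin n, Fin (a i) × Fin (b i)) ℂ) analogously. Let Φ_n denote the level-n Kronecker coproduct isomorphism from Matrix (Π i : Fin n, Fin (a i) × Fin (b i)) ℂ onto Matrix (Π i : Fin n, Fin (a i)) ℂ ⊗[ℂ] Matrix (Π i : Fin n, Fin (b i)) ℂ determined on matrix units by E_{J,K} ↦ E_{J₁,K₁} ⊗ E_{J₂,K₂} (splitting each index J i = (J₁ i, J₂ i)). Then (ψ_a^{(n)} ⊗ ψ_b^{(n)}) ∘ Φ_n = Φ_{n+1} ∘ ψ_{a·b}^{(n)}. -/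

import Mathlib

open Matrix
open scoped TensorProduct

lemma snoc_eq_iff' {n : ℕ} {ι : Fin (n + 1) → Sort*} (J : Π i : Fin n, ι i.castSucc)
    (x : ι (Fin.last n)) (J' : Π i, ι i) :
    Fin.snoc J x = J' ↔ (J = fun i : Fin n => J' i.castSucc) ∧ x = J' (Fin.last n) := by
  constructor
  · rintro rfl
    exact ⟨funext fun i => (Fin.snoc_castSucc ..).symm, (Fin.snoc_last ..).symm⟩
  · rintro ⟨rfl, rfl⟩
    exact Fin.snoc_init_self J'

lemma psi_stdBasisMatrix {n : ℕ} (κ : ℕ → Type*) [∀ m, DecidableEq (κ m)] [Fintype (κ n)]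
    (ψ : Matrix (Π i : Fin n, κ i) (Π i : Fin n, κ i) ℂ →ₗ[ℂ]
      Matrix (Π i : Fin (n + 1), κ i) (Π i : Fin (n + 1), κ i) ℂ)
    (hψ : ∀ X (J K : Π i : Fin (n + 1), κ i), ψ X J K =
      if J (Fin.last n) = K (Fin.last n) then
        X (fun i => J i.castSucc) (fun i => K i.castSucc) else 0)
    (J K : Π i : Fin n, κ i) :
    ψ (single J K 1) =
      ∑ x : κ n, single (Fin.snoc J x : Π i : Fin (n + 1), κ i)
        (Fin.snoc K x : Π i : Fin (n + 1), κ i) 1 := by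
  ext J' K'
  rw [hψ]
  simp only [Matrix.sum_apply, single, of_apply,
    snoc_eq_iff' (ι := fun i : Fin (n + 1) => κ i)]
  by_cases h : J' (Fin.last n) = K' (Fin.last n)
  · rw [if_pos h]
    have hc : ∀ x : κ n,
        (((J = fun i : Fin n => J' i.castSucc) ∧ x = J' (Fin.last n)) ∧
          (K = fun i : Fin n => K' i.castSucc) ∧ x = K' (Fin.last n)) ↔
        (x = J' (Fin.last n) ∧
          ((J = fun i : Fin n => J' i.castSucc) ∧ K = fun i : Fin n => K' i.castSucc)) := by
      intro x
      constructor
      · rintro ⟨⟨h1, rfl⟩, h2, -⟩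
        exact ⟨rfl, h1, h2⟩
      · rintro ⟨rfl, h1, h2⟩
        exact ⟨⟨h1, rfl⟩, h2, h⟩
    simp only [hc, ite_and, Finset.sum_ite_eq', Finset.mem_univ, if_true]
  · rw [if_neg h, Finset.sum_eq_zero]
    intro x _
    rw [if_neg]
    rintro ⟨⟨-, rfl⟩, ⟨-, h2⟩⟩
    exact h h2

lemma snoc_fst {n : ℕ} {a b : ℕ → ℕ} (J : Π i : Fin n, Fin (a i) × Fin (b i))
    (x : Fin (a n) × Fin (b n)) :
    (fun i : Fin (n + 1) =>
        ((Fin.snoc J x : Π i : Fin (n + 1), Fin (a i) × Fin (b i)) i).1) =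
      (Fin.snoc (fun i => (J i).1) x.1 : Π i : Fin (n + 1), Fin (a i)) := by
  funext i
  induction i using Fin.lastCases with
  | last => simp
  | cast i => simp

lemma snoc_snd {n : ℕ} {a b : ℕ → ℕ} (J : Π i : Fin n, Fin (a i) × Fin (b i))
    (x : Fin (a n) × Fin (b n)) :
    (fun i : Fin (n + 1) =>
        ((Fin.snoc J x : Π i : Fin (n + 1), Fin (a i) × Fin (b i)) i).2) =
      (Fin.snoc (fun i => (J i).2) x.2 : Π i : Fin (n + 1), Fin (b i)) := by
  funext i
  induction i using Fin.lastCases with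
  | last => simp
  | cast i => simp

/-- Compatibility of the Kronecker coproduct with the canonical
embeddings `ψ^{(n)} : X ↦ X ⊗ I` of the finite stages of the UHF algebras:
`(ψ_a^{(n)} ⊗ ψ_b^{(n)}) ∘ Φₙ = Φₙ₊₁ ∘ ψ_{a·b}^{(n)}`. -/
theorem kroneckerCoproduct_compat_embeddings (n : ℕ) (a b : ℕ → ℕ)
    (ψa : Matrix (Π i : Fin n, Fin (a i)) (Π i : Fin n, Fin (a i)) ℂ →ₗ[ℂ]
      Matrix (Π i : Fin (n + 1), Fin (a i)) (Π i : Fin (n + 1), Fin (a i)) ℂ)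
    (hψa : ∀ X (J K : Π i : Fin (n + 1), Fin (a i)),
      ψa X J K = if J (Fin.last n) = K (Fin.last n) then
        X (fun i => J i.castSucc) (fun i => K i.castSucc) else 0)
    (ψb : Matrix (Π i : Fin n, Fin (b i)) (Π i : Fin n, Fin (b i)) ℂ →ₗ[ℂ]
      Matrix (Π i : Fin (n + 1), Fin (b i)) (Π i : Fin (n + 1), Fin (b i)) ℂ)
    (hψb : ∀ X (J K : Π i : Fin (n + 1), Fin (b i)),
      ψb X J K = if J (Fin.last n) = K (Fin.last n) then
        X (fun i => J i.castSucc) (fun i => K i.castSucc) else 0)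
    (ψab : Matrix (Π i : Fin n, Fin (a i) × Fin (b i)) (Π i : Fin n, Fin (a i) × Fin (b i)) ℂ
      →ₗ[ℂ] Matrix (Π i : Fin (n + 1), Fin (a i) × Fin (b i))
        (Π i : Fin (n + 1), Fin (a i) × Fin (b i)) ℂ)
    (hψab : ∀ X (J K : Π i : Fin (n + 1), Fin (a i) × Fin (b i)),
      ψab X J K = if J (Fin.last n) = K (Fin.last n) then
        X (fun i => J i.castSucc) (fun i => K i.castSucc) else 0)
    (Φn : Matrix (Π i : Fin n, Fin (a i) × Fin (b i)) (Π i : Fin n, Fin (a i) × Fin (b i)) ℂ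
      →ₗ[ℂ] (Matrix (Π i : Fin n, Fin (a i)) (Π i : Fin n, Fin (a i)) ℂ ⊗[ℂ]
        Matrix (Π i : Fin n, Fin (b i)) (Π i : Fin n, Fin (b i)) ℂ))
    (hΦn : ∀ J K : Π i : Fin n, Fin (a i) × Fin (b i),
      Φn (Matrix.single J K 1) =
        Matrix.single (fun i => (J i).1) (fun i => (K i).1) (1 : ℂ) ⊗ₜ[ℂ]
          Matrix.single (fun i => (J i).2) (fun i => (K i).2) (1 : ℂ))
    (Φn1 : Matrix (Π i : Fin (n + 1), Fin (a i) × Fin (b i))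
        (Π i : Fin (n + 1), Fin (a i) × Fin (b i)) ℂ
      →ₗ[ℂ] (Matrix (Π i : Fin (n + 1), Fin (a i)) (Π i : Fin (n + 1), Fin (a i)) ℂ ⊗[ℂ]
        Matrix (Π i : Fin (n + 1), Fin (b i)) (Π i : Fin (n + 1), Fin (b i)) ℂ))
    (hΦn1 : ∀ J K : Π i : Fin (n + 1), Fin (a i) × Fin (b i),
      Φn1 (Matrix.single J K 1) =
        Matrix.single (fun i => (J i).1) (fun i => (K i).1) (1 : ℂ) ⊗ₜ[ℂ]
          Matrix.single (fun i => (J i).2) (fun i => (K i).2) (1 : ℂ)) :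
    ∀ X, (TensorProduct.map ψa ψb) (Φn X) = Φn1 (ψab X) := by
  have key : ∀ J K : Π i : Fin n, Fin (a i) × Fin (b i),
      (TensorProduct.map ψa ψb) (Φn (Matrix.single J K 1)) =
        Φn1 (ψab (Matrix.single J K 1)) := by
    intro J K
    rw [hΦn, TensorProduct.map_tmul,
      psi_stdBasisMatrix (fun m => Fin (a m)) ψa hψa
        (fun i => (J i).1) (fun i => (K i).1),
      psi_stdBasisMatrix (fun m => Fin (b m)) ψb hψb
        (fun i => (J i).2) (fun i => (K i).2),
      psi_stdBasisMatrix (fun m => Fin (a m) × Fin (b m)) ψab hψab J K,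
      map_sum, TensorProduct.sum_tmul]
    simp only [TensorProduct.tmul_sum, hΦn1]
    conv_rhs => rw [Fintype.sum_prod_type]
    simp only [snoc_fst, snoc_snd]
  intro X
  rw [Matrix.matrix_eq_sum_single X]
  simp only [map_sum]
  apply Finset.sum_congr rfl
  intro J _
  apply Finset.sum_congr rfl
  intro K _
  have : Matrix.single J K (X J K) = X J K • Matrix.single J K (1 : ℂ) := by
    rw [Matrix.smul_single, smul_eq_mul, mul_one]
  rw [this]
  simp only [_root_.map_smul]
  rw [key J K]
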